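/- Let C be a commutative monoid and M a left H(C)-module. The assignment G^*(C, M)([n]) = ∏_{(a_1,...,a_n) ∈ C^n} M(a_1⋯a_n), with action on a pointed map f : [n] → [m] given by (f^*ξ)(a_1,...,a_n) = (b_0)_*(ξ(b_1,...,b_m)) where b_j = ∏_{i: f(i)=j} a_i, is a well-defined right Γ-module, i.e., a contravariant functor from Γ to K-modules. -/

import Mathlib

open CategoryTheory

set_option maxHeartbeats 1000000
set_option synthInstance.maxHeartbeats 1000000

def HCat (C : Type) := C
def HCat.of {C : Type} : C → HCat C := id
def HCat.un {C : Type} : HCat C → C := id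

instance (C : Type) [CommMonoid C] : Category (HCat C) where
  Hom a b := {c : C // c * a.un = b.un}
  id a := ⟨1, one_mul a.un⟩
  comp f g := ⟨g.1 * f.1, by rw [mul_assoc, f.2, g.2]⟩
  id_comp f := Subtype.ext (mul_one f.1)
  comp_id f := Subtype.ext (one_mul f.1)
  assoc f g h := Subtype.ext (mul_assoc h.1 g.1 f.1).symm

abbrev GammaCat := ℕ

instance : Category GammaCat where
  Hom n m := {f : Fin (n+1) → Fin (m+1) // f 0 = 0}
  id n := ⟨id, rfl⟩
  comp f g := ⟨g.1 ∘ f.1, by simp [f.2, g.2]⟩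
  id_comp f := rfl
  comp_id f := rfl
  assoc f g h := rfl

variable (C : Type) [CommMonoid C] (K : Type) [CommRing K]

/-- Left `H(C)`-modules valued in `K`-modules. -/
abbrev LeftHModK := HCat C ⥤ ModuleCat K

/-- `G^*(C,M)([n]) = ∏_{(a_1,...,a_n) ∈ C^n} M(a_1 ⋯ a_n)`. -/
def GcoObj (M : LeftHModK C K) (n : ℕ) : Type :=
  ∀ v : Fin n → C, M.obj (HCat.of (∏ i, v i))

noncomputable instance (M : LeftHModK C K) (n : ℕ) : AddCommGroup (GcoObj C K M n) :=
  Pi.addCommGroup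

noncomputable instance (M : LeftHModK C K) (n : ℕ) : Module K (GcoObj C K M n) :=
  Pi.module _ _ _

/-- `b_j = ∏_{i : f(i) = j} a_i` for a pointed map `f : [n] → [m]` and a tuple `a`. -/
def bProd {n m : ℕ} (f : (n : GammaCat) ⟶ (m : GammaCat)) (v : Fin n → C)
    (j : Fin (m+1)) : C :=
  ∏ i ∈ Finset.univ.filter (fun i : Fin n => f.1 i.succ = j), v i

theorem bProd_mul {n m : ℕ} (f : (n : GammaCat) ⟶ (m : GammaCat)) (v : Fin n → C) :
    bProd C f v 0 * ∏ j : Fin m, bProd C f v j.succ = ∏ i, v i := by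
  have h1 : ∏ j : Fin (m+1), bProd C f v j = ∏ i, v i := by
    exact Finset.prod_fiberwise_of_maps_to (fun x _ => Finset.mem_univ (f.1 x.succ)) v
  rw [Fin.prod_univ_succ] at h1
  exact h1

/-- The contravariant action of `G^*(C,M)` on a pointed map `f : [n] → [m]`:
`(f^*ξ)(a_1,...,a_n) = (b_0)_*(ξ(b_1,...,b_m))`. -/
noncomputable def GcoMap (M : LeftHModK C K) {n m : ℕ}
    (f : (n : GammaCat) ⟶ (m : GammaCat)) (ξ : GcoObj C K M m) : GcoObj C K M n :=
  fun v => M.map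
    (⟨bProd C f v 0, bProd_mul C f v⟩ :
      HCat.of (∏ j : Fin m, bProd C f v j.succ) ⟶ HCat.of (∏ i, v i))
    (ξ (fun j : Fin m => bProd C f v j.succ))


-- congruence lemma
lemma map_eq (M : LeftHModK C K) {k : ℕ} (ξ : GcoObj C K M k) {w w' : Fin k → C}
    (hw : w = w') {b : C} (c c' : C) (hc : c * ∏ j, w j = b) (hc' : c' * ∏ j, w' j = b)
    (hcc : c = c') :
    M.map (⟨c, hc⟩ : HCat.of (∏ j, w j) ⟶ HCat.of b) (ξ w)
      = M.map (⟨c', hc'⟩ : HCat.of (∏ j, w' j) ⟶ HCat.of b) (ξ w') := by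
  subst hw; subst hcc; rfl

lemma bProd_id_zero (n : ℕ) (v : Fin n → C) : bProd C (𝟙 (n : GammaCat)) v 0 = 1 := by
  simp [bProd, CategoryStruct.id, Fin.succ_ne_zero]

lemma bProd_id_succ (n : ℕ) (v : Fin n → C) (j : Fin n) :
    bProd C (𝟙 (n : GammaCat)) v j.succ = v j := by
  simp only [bProd, CategoryStruct.id, id_eq, Fin.succ_inj]
  rw [Finset.filter_eq']
  simp

lemma prod_filter_succ {m : ℕ} (p : Fin (m+1) → Prop) [DecidablePred p] (hp : ¬ p 0)
    (F : Fin (m+1) → C) :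
    ∏ j ∈ Finset.univ.filter p, F j
      = ∏ j ∈ Finset.univ.filter (fun j : Fin m => p j.succ), F j.succ := by
  rw [Finset.prod_filter, Finset.prod_filter, Fin.prod_univ_succ, if_neg hp, one_mul]

lemma bProd_comp_succ {n m l : ℕ} (f : (n : GammaCat) ⟶ (m : GammaCat))
    (g : (m : GammaCat) ⟶ (l : GammaCat)) (v : Fin n → C) (k : Fin l) :
    bProd C g (fun j : Fin m => bProd C f v j.succ) k.succ = bProd C (f ≫ g) v k.succ := by
  have h := Finset.prod_fiberwise_of_maps_to
    (s := Finset.univ.filter (fun i : Fin n => g.1 (f.1 i.succ) = k.succ))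
    (t := Finset.univ.filter (fun j : Fin (m+1) => g.1 j = k.succ))
    (g := fun i : Fin n => f.1 i.succ) (f := v)
    (fun i hi => by simpa using (Finset.mem_filter.mp hi).2)
  have h2 : ∀ j : Fin m, g.1 j.succ = k.succ →
      (Finset.univ.filter (fun i : Fin n => g.1 (f.1 i.succ) = k.succ)).filter
          (fun i => f.1 i.succ = j.succ)
        = Finset.univ.filter (fun i : Fin n => f.1 i.succ = j.succ) := by
    intro j hj
    ext i
    simp only [Finset.mem_filter, Finset.mem_univ, true_and]
    exact ⟨fun hi => hi.2, fun hi => ⟨by rw [hi, hj], hi⟩⟩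
  calc bProd C g (fun j => bProd C f v j.succ) k.succ
      = ∏ j ∈ Finset.univ.filter (fun j : Fin m => g.1 j.succ = k.succ),
          ∏ i ∈ Finset.univ.filter (fun i : Fin n => f.1 i.succ = j.succ), v i := rfl
    _ = ∏ j ∈ Finset.univ.filter (fun j : Fin m => g.1 j.succ = k.succ),
          ∏ i ∈ (Finset.univ.filter (fun i : Fin n => g.1 (f.1 i.succ) = k.succ)).filter
            (fun i => f.1 i.succ = j.succ), v i := by
        refine Finset.prod_congr rfl (fun j hj => ?_)
        rw [h2 j (Finset.mem_filter.mp hj).2]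
    _ = ∏ j ∈ Finset.univ.filter (fun j : Fin (m+1) => g.1 j = k.succ),
          ∏ i ∈ (Finset.univ.filter (fun i : Fin n => g.1 (f.1 i.succ) = k.succ)).filter
            (fun i => f.1 i.succ = j), v i := by
        refine (prod_filter_succ C (fun j : Fin (m+1) => g.1 j = k.succ) ?_
          (fun j => ∏ i ∈ (Finset.univ.filter
            (fun i : Fin n => g.1 (f.1 i.succ) = k.succ)).filter
            (fun i => f.1 i.succ = j), v i)).symm
        simp [g.2, (Fin.succ_ne_zero k).symm]
    _ = ∏ i ∈ Finset.univ.filter (fun i : Fin n => g.1 (f.1 i.succ) = k.succ), v i := h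
    _ = bProd C (f ≫ g) v k.succ := rfl

lemma bProd_comp_zero {n m l : ℕ} (f : (n : GammaCat) ⟶ (m : GammaCat))
    (g : (m : GammaCat) ⟶ (l : GammaCat)) (v : Fin n → C) :
    bProd C f v 0 * bProd C g (fun j : Fin m => bProd C f v j.succ) 0
      = bProd C (f ≫ g) v 0 := by
  have h := Finset.prod_fiberwise_of_maps_to
    (s := Finset.univ.filter (fun i : Fin n => g.1 (f.1 i.succ) = 0 ∧ f.1 i.succ ≠ 0))
    (t := Finset.univ.filter (fun j : Fin (m+1) => g.1 j = 0 ∧ j ≠ 0))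
    (g := fun i : Fin n => f.1 i.succ) (f := v)
    (fun i hi => by simpa using (Finset.mem_filter.mp hi).2)
  have h2 : ∀ j : Fin m, g.1 j.succ = 0 →
      (Finset.univ.filter (fun i : Fin n => g.1 (f.1 i.succ) = 0 ∧ f.1 i.succ ≠ 0)).filter
          (fun i => f.1 i.succ = j.succ)
        = Finset.univ.filter (fun i : Fin n => f.1 i.succ = j.succ) := by
    intro j hj
    ext i
    simp only [Finset.mem_filter, Finset.mem_univ, true_and]
    exact ⟨fun hi => hi.2, fun hi => ⟨⟨by rw [hi, hj], by rw [hi]; exact Fin.succ_ne_zero j⟩, hi⟩⟩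
  have hg0 : bProd C g (fun j : Fin m => bProd C f v j.succ) 0
      = ∏ i ∈ Finset.univ.filter (fun i : Fin n => g.1 (f.1 i.succ) = 0 ∧ f.1 i.succ ≠ 0), v i := by
    calc bProd C g (fun j : Fin m => bProd C f v j.succ) 0
        = ∏ j ∈ Finset.univ.filter (fun j : Fin m => g.1 j.succ = 0),
            ∏ i ∈ Finset.univ.filter (fun i : Fin n => f.1 i.succ = j.succ), v i := rfl
      _ = ∏ j ∈ Finset.univ.filter (fun j : Fin m => g.1 j.succ = 0 ∧ j.succ ≠ 0),
            ∏ i ∈ Finset.univ.filter (fun i : Fin n => f.1 i.succ = j.succ), v i := by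
          congr 1
          apply Finset.filter_congr
          intro j _
          simp [Fin.succ_ne_zero]
      _ = ∏ j ∈ Finset.univ.filter (fun j : Fin m => g.1 j.succ = 0 ∧ j.succ ≠ 0),
            ∏ i ∈ (Finset.univ.filter
              (fun i : Fin n => g.1 (f.1 i.succ) = 0 ∧ f.1 i.succ ≠ 0)).filter
              (fun i => f.1 i.succ = j.succ), v i := by
          refine Finset.prod_congr rfl (fun j hj => ?_)
          rw [h2 j (Finset.mem_filter.mp hj).2.1]
      _ = ∏ j ∈ Finset.univ.filter (fun j : Fin (m+1) => g.1 j = 0 ∧ j ≠ 0),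
            ∏ i ∈ (Finset.univ.filter
              (fun i : Fin n => g.1 (f.1 i.succ) = 0 ∧ f.1 i.succ ≠ 0)).filter
              (fun i => f.1 i.succ = j), v i := by
          refine (prod_filter_succ C (fun j : Fin (m+1) => g.1 j = 0 ∧ j ≠ 0) ?_
            (fun j => ∏ i ∈ (Finset.univ.filter
              (fun i : Fin n => g.1 (f.1 i.succ) = 0 ∧ f.1 i.succ ≠ 0)).filter
              (fun i => f.1 i.succ = j), v i)).symm
          simp
      _ = ∏ i ∈ Finset.univ.filter (fun i : Fin n => g.1 (f.1 i.succ) = 0 ∧ f.1 i.succ ≠ 0),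
            v i := h
  have hf0 : bProd C f v 0
      = ∏ i ∈ (Finset.univ.filter (fun i : Fin n => g.1 (f.1 i.succ) = 0)).filter
          (fun i => f.1 i.succ = 0), v i := by
    show (∏ i ∈ Finset.univ.filter (fun i : Fin n => f.1 i.succ = 0), v i) = _
    congr 1
    rw [Finset.filter_filter]
    apply Finset.filter_congr
    intro i _
    constructor
    · intro hi; exact ⟨by rw [hi]; exact g.2, hi⟩
    · exact fun hi => hi.2
  have hs' : Finset.univ.filter (fun i : Fin n => g.1 (f.1 i.succ) = 0 ∧ f.1 i.succ ≠ 0)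
      = (Finset.univ.filter (fun i : Fin n => g.1 (f.1 i.succ) = 0)).filter
          (fun i => ¬ f.1 i.succ = 0) := by
    rw [Finset.filter_filter]
  rw [hg0, hf0, hs']
  exact Finset.prod_filter_mul_prod_filter_not _ _ _

lemma map_map (M : LeftHModK C K) {a b c : C} (s : C) (hs : s * a = b) (t : C)
    (ht : t * b = c) (x : M.obj (HCat.of a)) :
    M.map (⟨t, ht⟩ : HCat.of b ⟶ HCat.of c) (M.map (⟨s, hs⟩ : HCat.of a ⟶ HCat.of b) x)
      = M.map (⟨t * s, by show t * s * a = c; rw [mul_assoc, hs, ht]⟩ : HCat.of a ⟶ HCat.of c) x := by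
  have h : M.map (⟨t, ht⟩ : HCat.of b ⟶ HCat.of c) (M.map (⟨s, hs⟩ : HCat.of a ⟶ HCat.of b) x)
      = M.map ((⟨s, hs⟩ : HCat.of a ⟶ HCat.of b) ≫ (⟨t, ht⟩ : HCat.of b ⟶ HCat.of c)) x := by
    rw [M.map_comp]; rfl
  rw [h]; rfl

/-- `G^*(C, M)` is a well-defined right `Γ`-module: the action on morphisms is
`K`-linear, preserves identities, and is contravariantly functorial. -/
theorem Gco_is_right_Gamma_module (M : LeftHModK C K) :
    (∀ (n m : ℕ) (f : (n : GammaCat) ⟶ (m : GammaCat)),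
      IsLinearMap K (GcoMap C K M f)) ∧
    (∀ (n : ℕ) (ξ : GcoObj C K M n), GcoMap C K M (𝟙 (n : GammaCat)) ξ = ξ) ∧
    (∀ (n m l : ℕ) (f : (n : GammaCat) ⟶ (m : GammaCat))
      (g : (m : GammaCat) ⟶ (l : GammaCat)) (ξ : GcoObj C K M l),
      GcoMap C K M (f ≫ g) ξ = GcoMap C K M f (GcoMap C K M g ξ)) := by
  refine ⟨fun n m f => ⟨fun ξ η => funext fun v => ?_, fun c ξ => funext fun v => ?_⟩,
    fun n ξ => funext fun v => ?_, fun n m l f g ξ => funext fun v => ?_⟩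
  · exact map_add (M.map _).hom _ _
  · exact map_smul (M.map _).hom _ _
  · have h1 : (1 : C) * ∏ i, v i = ∏ i, v i := one_mul _
    calc GcoMap C K M (𝟙 (n : GammaCat)) ξ v
        = M.map (⟨bProd C (𝟙 (n : GammaCat)) v 0, bProd_mul C (𝟙 _) v⟩ :
            HCat.of (∏ j : Fin n, bProd C (𝟙 (n : GammaCat)) v j.succ) ⟶ HCat.of (∏ i, v i))
            (ξ (fun j : Fin n => bProd C (𝟙 (n : GammaCat)) v j.succ)) := rfl
      _ = M.map (⟨1, h1⟩ : HCat.of (∏ i, v i) ⟶ HCat.of (∏ i, v i)) (ξ v) :=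
          map_eq C K M ξ (funext (bProd_id_succ C n v)) _ _ _ _ (bProd_id_zero C n v)
      _ = ξ v := by
          have : (⟨1, h1⟩ : HCat.of (∏ i, v i) ⟶ HCat.of (∏ i, v i))
              = 𝟙 (HCat.of (∏ i, v i)) := rfl
          rw [this, M.map_id]; rfl
  · symm
    set w : Fin m → C := fun j : Fin m => bProd C f v j.succ with hwdef
    calc GcoMap C K M f (GcoMap C K M g ξ) v
        = M.map (⟨bProd C f v 0, bProd_mul C f v⟩ :
              HCat.of (∏ j : Fin m, bProd C f v j.succ) ⟶ HCat.of (∏ i, v i))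
            (M.map (⟨bProd C g w 0, bProd_mul C g w⟩ :
                HCat.of (∏ k : Fin l, bProd C g w k.succ) ⟶ HCat.of (∏ j, w j))
              (ξ (fun k : Fin l => bProd C g w k.succ))) := rfl
      _ = M.map (⟨bProd C f v 0 * bProd C g w 0, _⟩ :
              HCat.of (∏ k : Fin l, bProd C g w k.succ) ⟶ HCat.of (∏ i, v i))
            (ξ (fun k : Fin l => bProd C g w k.succ)) :=
          map_map C K M _ (bProd_mul C g w) _ (bProd_mul C f v) _
      _ = M.map (⟨bProd C (f ≫ g) v 0, bProd_mul C (f ≫ g) v⟩ :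
              HCat.of (∏ k : Fin l, bProd C (f ≫ g) v k.succ) ⟶ HCat.of (∏ i, v i))
            (ξ (fun k : Fin l => bProd C (f ≫ g) v k.succ)) :=
          map_eq C K M ξ (funext (bProd_comp_succ C f g v)) _ _ _ _
            (bProd_comp_zero C f g v)
      _ = GcoMap C K M (f ≫ g) ξ v := rfl
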